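/- For α ∈ (-1,1), 0 ≤ γ < 1, and θ ∈ ℝ, the boundary point L(e^{iθ}) of the Pascal snail map L(z) = 2(1-γ)z/(1-αz)² has modulus ρ satisfying ρ = 2(1-γ)|α|/α · (1+α²+2|α|cos φ)/(1-α²)² where φ = arg L(e^{iθ}); equivalently, the point u+iv = L(e^{iθ}) satisfies (u²+v²-eau)² = a²(u²+v²) with e = 2α/(1+α²) and a = 2(1-γ)(1+α²)/(1-α²)². -/

import Mathlib

open Complex

theorem pascal_snail_polar (α γ θ : ℝ) (hα1 : -1 < α) (hα2 : α < 1) (hα0 : α ≠ 0)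
    (hγ1 : 0 ≤ γ) (hγ2 : γ < 1)
    (u v e a : ℝ)
    (hu : u = (2 * (1 - (γ : ℂ)) * Complex.exp (θ * Complex.I) /
        (1 - (α : ℂ) * Complex.exp (θ * Complex.I)) ^ 2).re)
    (hv : v = (2 * (1 - (γ : ℂ)) * Complex.exp (θ * Complex.I) /
        (1 - (α : ℂ) * Complex.exp (θ * Complex.I)) ^ 2).im)
    (he : e = 2 * α / (1 + α ^ 2))
    (ha : a = 2 * (1 - γ) * (1 + α ^ 2) / (1 - α ^ 2) ^ 2) :
    (u ^ 2 + v ^ 2 - e * a * u) ^ 2 = a ^ 2 * (u ^ 2 + v ^ 2) := by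
  set c := Real.cos θ with hc
  set s := Real.sin θ with hs
  have hz : Complex.exp (θ * Complex.I) = (c : ℂ) + (s : ℂ) * Complex.I := by
    rw [Complex.exp_mul_I, hc, hs, Complex.ofReal_cos, Complex.ofReal_sin]
  have hcs : c ^ 2 + s ^ 2 = 1 := by
    rw [hc, hs]; exact Real.cos_sq_add_sin_sq θ
  have hcsC : (c : ℂ) ^ 2 + (s : ℂ) ^ 2 = 1 := by exact_mod_cast hcs
  have habs : |α| < 1 := abs_lt.mpr ⟨hα1, hα2⟩
  have hac : α * c ≤ |α| := by
    calc α * c ≤ |α * c| := le_abs_self _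
      _ = |α| * |c| := abs_mul _ _
      _ ≤ |α| * 1 := by
          have h := Real.abs_cos_le_one θ
          have h0 := abs_nonneg α
          nlinarith
      _ = |α| := mul_one _
  have hD : 0 < 1 - 2 * α * c + α ^ 2 := by
    have h1 : 0 < 1 - |α| := by linarith
    nlinarith [_root_.sq_abs α, sq_nonneg (1 - |α|)]
  have hD0 : (1 - 2 * α * c + α ^ 2) ≠ 0 := ne_of_gt hD
  have h1 : (1 : ℝ) + α ^ 2 ≠ 0 := by positivity
  have h2 : (1 : ℝ) - α ^ 2 ≠ 0 := by nlinarith [_root_.sq_abs α]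
  -- denominator nonzero in ℂ
  have hnsq : Complex.normSq (1 - (α : ℂ) * ((c : ℂ) + (s : ℂ) * Complex.I))
      = 1 - 2 * α * c + α ^ 2 := by
    simp [Complex.normSq_apply]
    linear_combination (α ^ 2) * hcs
  have hw : (1 - (α : ℂ) * ((c : ℂ) + (s : ℂ) * Complex.I)) ≠ 0 := by
    intro h
    rw [h, map_zero] at hnsq
    exact hD0 hnsq.symm
  have hw2 : (1 - (α : ℂ) * ((c : ℂ) + (s : ℂ) * Complex.I)) ^ 2 ≠ 0 := pow_ne_zero 2 hw
  have hDC : ((1 : ℂ) - 2 * (α : ℂ) * (c : ℂ) + (α : ℂ) ^ 2) ≠ 0 := by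
    intro h
    apply hD0
    exact_mod_cast congrArg Complex.re h
  have hDC2 : ((1 : ℂ) - 2 * (α : ℂ) * (c : ℂ) + (α : ℂ) ^ 2) ^ 2 ≠ 0 := pow_ne_zero 2 hDC
  have hUV : 2 * (1 - (γ : ℂ)) * Complex.exp (θ * Complex.I) /
      (1 - (α : ℂ) * Complex.exp (θ * Complex.I)) ^ 2
      = (2 * (1 - (γ : ℂ)) * ((1 + (α : ℂ) ^ 2) * (c : ℂ) - 2 * (α : ℂ))
          + 2 * (1 - (γ : ℂ)) * (s : ℂ) * (1 - (α : ℂ) ^ 2) * Complex.I) /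
        ((1 : ℂ) - 2 * (α : ℂ) * (c : ℂ) + (α : ℂ) ^ 2) ^ 2 := by
    rw [hz, div_eq_div_iff hw2 hDC2]
    linear_combination (2 * (1 - (γ : ℂ)) *
      ((α : ℂ) ^ 2 * ((c : ℂ) - (s : ℂ) * Complex.I) * (1 - (α : ℂ) * ((c : ℂ) + (s : ℂ) * Complex.I)) ^ 2
        - 2 * (α : ℂ) * (1 - (α : ℂ) * ((c : ℂ) + (s : ℂ) * Complex.I)) ^ 2
        - 2 * (α : ℂ) ^ 2 * ((c : ℂ) + (s : ℂ) * Complex.I) *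
            (1 - (α : ℂ) * ((c : ℂ) + (s : ℂ) * Complex.I)) *
            (1 - (α : ℂ) * ((c : ℂ) - (s : ℂ) * Complex.I))
        + (α : ℂ) ^ 4 * ((c : ℂ) ^ 2 + (s : ℂ) ^ 2 - 1) * ((c : ℂ) + (s : ℂ) * Complex.I))) * hcsC
      + ((4) * (α:ℂ) * (s:ℂ)^2 - (4) * (α:ℂ) * (γ:ℂ) * (s:ℂ)^2 - (2) * (α:ℂ)^2 * (s:ℂ)^3 * Complex.I - (6) * (α:ℂ)^2 * (c:ℂ) * (s:ℂ)^2 + (2) * (α:ℂ)^2 * (γ:ℂ) * (s:ℂ)^3 * Complex.I + (6) * (α:ℂ)^2 * (γ:ℂ) * (c:ℂ) * (s:ℂ)^2 + (4) * (α:ℂ)^4 * (s:ℂ)^3 * Complex.I - (2) * (α:ℂ)^4 * (s:ℂ)^5 * Complex.I + (4) * (α:ℂ)^4 * (c:ℂ) * (s:ℂ)^2 - (2) * (α:ℂ)^4 * (c:ℂ) * (s:ℂ)^4 - (2) * (α:ℂ)^4 * (c:ℂ)^2 * (s:ℂ)^3 * Complex.I - (2) * (α:ℂ)^4 * (c:ℂ)^3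 * (s:ℂ)^2 - (4) * (α:ℂ)^4 * (γ:ℂ) * (s:ℂ)^3 * Complex.I + (2) * (α:ℂ)^4 * (γ:ℂ) * (s:ℂ)^5 * Complex.I - (4) * (α:ℂ)^4 * (γ:ℂ) * (c:ℂ) * (s:ℂ)^2 + (2) * (α:ℂ)^4 * (γ:ℂ) * (c:ℂ) * (s:ℂ)^4 + (2) * (α:ℂ)^4 * (γ:ℂ) * (c:ℂ)^2 * (s:ℂ)^3 * Complex.I + (2) * (α:ℂ)^4 * (γ:ℂ) * (c:ℂ)^3 * (s:ℂ)^2) * Complex.I_sq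
  have hUV' : 2 * (1 - (γ : ℂ)) * Complex.exp (θ * Complex.I) /
      (1 - (α : ℂ) * Complex.exp (θ * Complex.I)) ^ 2
      = ((2 * (1 - γ) * ((1 + α ^ 2) * c - 2 * α) / (1 - 2 * α * c + α ^ 2) ^ 2 : ℝ) : ℂ)
        + ((2 * (1 - γ) * (s * (1 - α ^ 2)) / (1 - 2 * α * c + α ^ 2) ^ 2 : ℝ) : ℂ) * Complex.I := by
    rw [hUV]
    push_cast
    field_simp
  have hu' : u = 2 * (1 - γ) * ((1 + α ^ 2) * c - 2 * α) / (1 - 2 * α * c + α ^ 2) ^ 2 := by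
    rw [hu, hUV']
    simp only [Complex.add_re, Complex.ofReal_re, Complex.mul_re, Complex.ofReal_im,
      Complex.I_re, Complex.I_im]
    ring
  have hv' : v = 2 * (1 - γ) * (s * (1 - α ^ 2)) / (1 - 2 * α * c + α ^ 2) ^ 2 := by
    rw [hv, hUV']
    simp only [Complex.add_im, Complex.ofReal_re, Complex.mul_im, Complex.ofReal_im,
      Complex.I_re, Complex.I_im]
    ring
  have hsum : u ^ 2 + v ^ 2 = 4 * (1 - γ) ^ 2 / (1 - 2 * α * c + α ^ 2) ^ 2 := by
    rw [hu', hv', div_pow, div_pow, ← add_div,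
      div_eq_div_iff (by positivity) (pow_ne_zero 2 hD0)]
    linear_combination (4 * (1 - γ) ^ 2 * (1 - α ^ 2) ^ 2 * (1 - 2 * α * c + α ^ 2) ^ 2) * hcs
  have hkey : u ^ 2 + v ^ 2 - e * a * u
      = a * (2 * (1 - γ) / (1 - 2 * α * c + α ^ 2)) := by
    rw [hsum, hu', he, ha]
    field_simp
    ring
  rw [hkey, hsum]
  field_simp
  ring
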